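/- For a Csiszár transformation f(x) = Σ_θ π(θ) φ(x(θ)) with φ: ℝ₊ → [0,∞] convex, lower semicontinuous and ψ(t) = sup_{s ≥ 0}(ts − φ(s)) its conjugate, the Fenchel conjugate of f over ℝ₊^Θ equals f*(x) = Σ_θ π(θ) ψ(x(θ)/π(θ)). -/

import Mathlib

open scoped ENNReal BigOperators

/-- A probability mass function on a finite set. -/
def IsPMF {Ω : Type*} [Fintype Ω] (p : Ω → ℝ) : Prop :=
  (∀ ω, 0 ≤ p ω) ∧ ∑ ω, p ω = 1

/-- The Fenchel conjugate over the nonnegative orthant of an `[0,∞]`-valued function,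
with values in the extended reals: `f*(x) = sup_{y ≥ 0} ⟨x,y⟩ − f(y)`. -/
noncomputable def conjOrthant {Θ : Type*} [Fintype Θ] (f : (Θ → ℝ) → ℝ≥0∞)
    (x : Θ → ℝ) : EReal :=
  ⨆ y : {y : Θ → ℝ // ∀ θ, 0 ≤ y θ},
    ((∑ θ, x θ * y.1 θ : ℝ) : EReal) - (f y.1 : EReal)

/-- The one-dimensional conjugate `ψ(t) = sup_{s ≥ 0} (t·s − φ(s))`. -/
noncomputable def conj1 (φ : ℝ → ℝ≥0∞) (t : ℝ) : EReal :=
  ⨆ s : {s : ℝ // 0 ≤ s}, ((t * s.1 : ℝ) : EReal) - (φ s.1 : EReal)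

/-- Multiplying a supremum of EReals by a positive real constant. -/
lemma coe_mul_iSup_aux {c : ℝ} (hc : 0 < c) {ι : Type*} [Nonempty ι] (f : ι → EReal) :
    (c : EReal) * ⨆ i, f i = ⨆ i, (c : EReal) * f i := by
  have hmono : ∀ (d : ℝ), 0 < d → ∀ a b : EReal, a ≤ b → (d : EReal) * a ≤ (d : EReal) * b := by
    intro d hd a b hab
    exact mul_le_mul_of_nonneg_left hab (by exact_mod_cast hd.le)
  apply le_antisymm
  · have h1 : (⨆ i, f i) ≤ (c⁻¹ : ℝ) * ⨆ i, (c : EReal) * f i := by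
      apply iSup_le
      intro i
      have : f i = (c⁻¹ : ℝ) * ((c : EReal) * f i) := by
        rw [← mul_assoc, ← EReal.coe_mul, inv_mul_cancel₀ hc.ne', EReal.coe_one, one_mul]
      rw [this]
      exact hmono _ (inv_pos.2 hc) _ _ (le_iSup (fun j => (c : EReal) * f j) i)
    calc (c : EReal) * ⨆ i, f i ≤ (c : EReal) * ((c⁻¹ : ℝ) * ⨆ i, (c : EReal) * f i) :=
          hmono _ hc _ _ h1
      _ = ⨆ i, (c : EReal) * f i := by
          rw [← mul_assoc, ← EReal.coe_mul, mul_inv_cancel₀ hc.ne', EReal.coe_one, one_mul]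
  · exact iSup_le fun i => hmono _ hc _ _ (le_iSup _ i)

/-- Sum of suprema equals supremum of sums, over a finite index (EReal version). -/
lemma sum_iSup_aux {ι : Type*} {S : Type*} [Nonempty S] (h : ι → S → EReal)
    (t : Finset ι) :
    ∑ i ∈ t, (⨆ s, h i s) = ⨆ y : ι → S, ∑ i ∈ t, h i (y i) := by
  classical
  induction t using Finset.induction_on with
  | empty => simp
  | @insert a t ha ih =>
    rw [Finset.sum_insert ha, ih]
    apply le_antisymm
    · apply EReal.add_le_of_forall_lt
      intro a' ha' b' hb'
      rw [lt_iSup_iff] at ha' hb'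
      obtain ⟨s, hs⟩ := ha'
      obtain ⟨y, hy⟩ := hb'
      refine le_trans (EReal.add_lt_add hs hy).le ?_
      refine le_trans (le_of_eq ?_) (le_iSup _ (Function.update y a s))
      rw [Finset.sum_insert ha, Function.update_self]
      congr 1
      apply Finset.sum_congr rfl
      intro i hi
      rw [Function.update_of_ne (by rintro rfl; exact ha hi)]
    · apply iSup_le
      intro y
      rw [Finset.sum_insert ha]
      exact add_le_add (le_iSup _ (y a)) (le_iSup (fun z : ι → S => ∑ i ∈ t, h i (z i)) y)

/-- Coercion of a real finite sum into `EReal`. -/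
lemma coe_sum_aux {ι : Type*} (t : Finset ι) (a : ι → ℝ) :
    ((∑ i ∈ t, a i : ℝ) : EReal) = ∑ i ∈ t, ((a i : ℝ) : EReal) := by
  induction t using Finset.cons_induction with
  | empty => simp
  | cons i t hi ih => rw [Finset.sum_cons, Finset.sum_cons, EReal.coe_add, ih]

/-- Splitting a difference of sums into a sum of differences (EReal version). -/
lemma sub_sum_aux {ι : Type*} (t : Finset ι) (a : ι → ℝ) (b : ι → ℝ≥0∞) :
    ((∑ i ∈ t, a i : ℝ) : EReal) - ((∑ i ∈ t, b i : ℝ≥0∞) : EReal)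
      = ∑ i ∈ t, (((a i : ℝ) : EReal) - ((b i : ℝ≥0∞) : EReal)) := by
  classical
  by_cases htop : ∀ i ∈ t, b i ≠ ⊤
  · have hsum : ∑ i ∈ t, b i ≠ ⊤ := by
      simp only [ne_eq, ENNReal.sum_eq_top]
      push_neg
      exact htop
    have h1 : ((∑ i ∈ t, b i : ℝ≥0∞) : EReal) = (((∑ i ∈ t, b i).toReal : ℝ) : EReal) := by
      rw [← ENNReal.ofReal_toReal hsum, EReal.coe_ennreal_ofReal,
        max_eq_left ENNReal.toReal_nonneg, ENNReal.ofReal_toReal hsum]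
    have h2 : ∀ i ∈ t, ((b i : ℝ≥0∞) : EReal) = (((b i).toReal : ℝ) : EReal) := by
      intro i hi
      rw [← ENNReal.ofReal_toReal (htop i hi), EReal.coe_ennreal_ofReal,
        max_eq_left ENNReal.toReal_nonneg, ENNReal.ofReal_toReal (htop i hi)]
    rw [h1, ENNReal.toReal_sum htop, ← EReal.coe_sub, ← Finset.sum_sub_distrib,
      coe_sum_aux]
    apply Finset.sum_congr rfl
    intro i hi
    rw [EReal.coe_sub, h2 i hi]
  · push_neg at htop
    obtain ⟨i₀, hi₀, hbtop⟩ := htop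
    have hsum : ∑ i ∈ t, b i = ⊤ := ENNReal.sum_eq_top.2 ⟨i₀, hi₀, hbtop⟩
    rw [hsum, EReal.coe_ennreal_top, EReal.sub_top]
    have hterm : ((a i₀ : ℝ) : EReal) - ((b i₀ : ℝ≥0∞) : EReal) = ⊥ := by
      rw [hbtop, EReal.coe_ennreal_top, EReal.sub_top]
    rw [← Finset.add_sum_erase t _ hi₀, hterm, EReal.bot_add]

/-- For a Csiszár transformation `f(x) = Σ_θ π(θ) φ(x(θ))`, the Fenchel conjugate over
`ℝ₊^Θ` equals `f*(x) = Σ_θ π(θ) ψ(x(θ)/π(θ))`, where `ψ = φ*`. -/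
theorem stmt7 {Θ : Type*} [Fintype Θ]
    (π : Θ → ℝ) (hπ : IsPMF π) (hπpos : ∀ θ, 0 < π θ)
    (φ : ℝ → ℝ≥0∞)
    (hφconv : ∀ s t : ℝ, 0 ≤ s → 0 ≤ t → ∀ a b : ℝ, 0 ≤ a → 0 ≤ b → a + b = 1 →
        φ (a * s + b * t) ≤ ENNReal.ofReal a * φ s + ENNReal.ofReal b * φ t)
    (hφlsc : LowerSemicontinuousOn φ (Set.Ici 0)) (hφ1 : φ 1 = 0)
    (x : Θ → ℝ) :
    conjOrthant (fun y => ∑ θ, ENNReal.ofReal (π θ) * φ (y θ)) x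
      = ∑ θ, ((π θ : ℝ) : EReal) * conj1 φ (x θ / π θ) := by
  classical
  haveI : Nonempty {s : ℝ // 0 ≤ s} := ⟨⟨0, le_refl 0⟩⟩
  -- per-coordinate integrand
  set h : Θ → {s : ℝ // 0 ≤ s} → EReal :=
    fun θ s => ((x θ * s.1 : ℝ) : EReal) - ((ENNReal.ofReal (π θ) * φ s.1 : ℝ≥0∞) : EReal)
    with hh
  -- RHS equals sum of sups of h
  have hRHS : ∀ θ, ((π θ : ℝ) : EReal) * conj1 φ (x θ / π θ) = ⨆ s, h θ s := by
    intro θ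
    rw [conj1, coe_mul_iSup_aux (hπpos θ)]
    apply iSup_congr
    intro s
    by_cases hφs : φ s.1 = ⊤
    · rw [hφs]
      have h1 : ((⊤ : ℝ≥0∞) : EReal) = ⊤ := EReal.coe_ennreal_top
      rw [h1, EReal.sub_top, EReal.coe_mul_bot_of_pos (hπpos θ), hh]
      have h2 : ENNReal.ofReal (π θ) * (⊤ : ℝ≥0∞) = ⊤ := by
        rw [ENNReal.mul_top]
        simp [ENNReal.ofReal_eq_zero, not_le.2 (hπpos θ)]
      simp only [hφs, h2, EReal.coe_ennreal_top, EReal.sub_top]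
    · set r := (φ s.1).toReal with hr
      have hrnn : 0 ≤ r := ENNReal.toReal_nonneg
      have hφr : φ s.1 = ENNReal.ofReal r := (ENNReal.ofReal_toReal hφs).symm
      have h1 : ((φ s.1 : ℝ≥0∞) : EReal) = ((r : ℝ) : EReal) := by
        rw [hφr, EReal.coe_ennreal_ofReal, max_eq_left hrnn]
      have h2 : ((ENNReal.ofReal (π θ) * φ s.1 : ℝ≥0∞) : EReal) = ((π θ * r : ℝ) : EReal) := by
        rw [hφr, ← ENNReal.ofReal_mul (hπpos θ).le, EReal.coe_ennreal_ofReal,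
          max_eq_left (mul_nonneg (hπpos θ).le hrnn)]
      rw [h1]
      show (π θ : EReal) * (((x θ / π θ * s.1 : ℝ) : EReal) - ((r : ℝ) : EReal))
          = ((x θ * s.1 : ℝ) : EReal) - ((ENNReal.ofReal (π θ) * φ s.1 : ℝ≥0∞) : EReal)
      rw [h2, ← EReal.coe_sub, ← EReal.coe_mul, ← EReal.coe_sub]
      congr 1
      have hkey : π θ * (x θ / π θ * s.1) = x θ * s.1 := by
        field_simp
        rw [mul_assoc]
        exact mul_div_cancel_left₀ _ (hπpos θ).ne'
      rw [mul_sub, hkey]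
  rw [Finset.sum_congr rfl fun θ _ => hRHS θ, sum_iSup_aux h Finset.univ]
  -- LHS: rewrite each element of the sup as a sum of h's, then reindex
  rw [conjOrthant]
  apply le_antisymm
  · apply iSup_le
    intro y
    rw [sub_sum_aux Finset.univ (fun θ => x θ * y.1 θ) (fun θ => ENNReal.ofReal (π θ) * φ (y.1 θ))]
    refine le_trans (le_of_eq ?_) (le_iSup _ (fun θ => (⟨y.1 θ, y.2 θ⟩ : {s : ℝ // 0 ≤ s})))
    rfl
  · apply iSup_le
    intro y
    refine le_trans (le_of_eq ?_)
      (le_iSup _ (⟨fun θ => (y θ).1, fun θ => (y θ).2⟩ : {y : Θ → ℝ // ∀ θ, 0 ≤ y θ}))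
    rw [sub_sum_aux Finset.univ (fun θ => x θ * (y θ).1)
      (fun θ => ENNReal.ofReal (π θ) * φ ((y θ).1))]
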